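/- arXiv:1811.02878 — 2 statements merged into one kernel-verified Lean document; each statement's English description precedes it below -/
import Mathlib

section
/- For each $\beta\in[0,\infty)$, $s\in(1,\infty)$, and any cube $Q\subset\mathbb{R}^d$, the Luxemburg norm satisfies $\|f\|_{L(\log L)^{\beta},Q} \le C\Big(1+\big(\frac{\beta}{s-1}\big)^{\beta}\Big)\Big(\frac{1}{|Q|}\int_Q |f|^s\Big)^{1/s}$, with $C$ depending only on $\beta$ (and not on $s$, $Q$, $f$). -/
open MeasureTheory ENNReal Filter Set

noncomputable section

namespace Rough

abbrev Ed (d : ℕ) := EuclideanSpace ℝ (Fin d)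

structure Cube (d : ℕ) where
  center : Ed d
  halfside : ℝ
  halfside_pos : 0 < halfside

variable {d : ℕ}

def Cube.carrier (Q : Cube d) : Set (Ed d) :=
  {x | ∀ i, |x i - Q.center i| ≤ Q.halfside}

def Cube.dilate (Q : Cube d) (t : ℝ) (ht : 0 < t) : Cube d :=
  ⟨Q.center, t * Q.halfside, mul_pos ht Q.halfside_pos⟩

/-- Average of an `ℝ≥0∞`-valued function over a cube. -/
def lavg (Q : Cube d) (f : Ed d → ℝ≥0∞) : ℝ≥0∞ :=
  (volume Q.carrier)⁻¹ * ∫⁻ x in Q.carrier, f x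

/-- Hardy–Littlewood maximal operator over cubes, `ℝ≥0∞`-valued. -/
def maximal (f : Ed d → ℝ≥0∞) (x : Ed d) : ℝ≥0∞ :=
  ⨆ (Q : Cube d) (_ : x ∈ Q.carrier), lavg Q f

def Mabs (f : Ed d → ℝ) (x : Ed d) : ℝ≥0∞ :=
  maximal (fun y => ENNReal.ofReal |f y|) x

/-- `A₁` constant. -/
def A1Const (w : Ed d → ℝ) : ℝ≥0∞ :=
  ⨆ x : Ed d, Mabs w x / ENNReal.ofReal (w x)

/-- Fujii–Wilson `A∞` constant. -/
def AinfConst (w : Ed d → ℝ) : ℝ≥0∞ :=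
  ⨆ Q : Cube d,
    (∫⁻ x in Q.carrier, ENNReal.ofReal (w x))⁻¹ *
      ∫⁻ x in Q.carrier,
        maximal (Q.carrier.indicator fun y => ENNReal.ofReal (w y)) x

/-- Muckenhoupt `A_p` constant. -/
def ApConst (p : ℝ) (w : Ed d → ℝ) : ℝ≥0∞ :=
  ⨆ Q : Cube d,
    lavg Q (fun x => ENNReal.ofReal (w x)) *
      (lavg Q fun x => ENNReal.ofReal (w x ^ (-1 / (p - 1)))) ^ (p - 1)

/-- Localized Luxemburg norm `‖f‖_{L(log L)^β, Q}`. -/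
def luxNorm (β : ℝ) (Q : Cube d) (f : Ed d → ℝ) : ℝ :=
  sInf {t : ℝ | 0 < t ∧
    (∫⁻ x in Q.carrier,
      ENNReal.ofReal (|f x| / t * Real.log (Real.exp 1 + |f x| / t) ^ β))
      ≤ volume Q.carrier}

/-- Orlicz maximal operator `M_{L(log L)^β}`. -/
def MOrlicz (β : ℝ) (f : Ed d → ℝ) (x : Ed d) : ℝ≥0∞ :=
  ⨆ (Q : Cube d) (_ : x ∈ Q.carrier), ENNReal.ofReal (luxNorm β Q f)

def IsSparse (η : ℝ) (S : Set (Cube d)) : Prop :=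
  ∃ E : Cube d → Set (Ed d),
    (∀ Q ∈ S, MeasurableSet (E Q) ∧ E Q ⊆ Q.carrier ∧
      ENNReal.ofReal η * volume Q.carrier ≤ volume (E Q)) ∧
    S.Pairwise fun Q Q' => Disjoint (E Q) (E Q')

/-- Bilinear sparse form `𝓐_{S; L(log L)^β, L^r}(f, g)`. -/
def sparseForm (β r : ℝ) (S : Set (Cube d)) (f g : Ed d → ℝ) : ℝ≥0∞ :=
  ∑' Q : S, volume Q.1.carrier * ENNReal.ofReal (luxNorm β Q.1 f) *
    (lavg Q.1 fun x => ENNReal.ofReal (|g x| ^ r)) ^ (1 / r)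

def Sublinear (U : (Ed d → ℝ) → Ed d → ℝ) : Prop :=
  (∀ f g x, |U (f + g) x| ≤ |U f x| + |U g x|) ∧
    ∀ (c : ℝ) (f) (x), |U (c • f) x| = |c| * |U f x|

def LinearOp (U : (Ed d → ℝ) → Ed d → ℝ) : Prop :=
  (∀ f g, U (f + g) = U f + U g) ∧ ∀ (c : ℝ) (f), U (c • f) = c • U f

/-- `(L(log L)^β, L^r)`-bilinear sparse domination with bound `A`
(with `η`-sparse families). -/
def HasSparseDom (U : (Ed d → ℝ) → Ed d → ℝ) (β r η A : ℝ) : Prop :=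
  ∀ f : Ed d → ℝ, Measurable f → (∃ C, ∀ x, |f x| ≤ C) → HasCompactSupport f →
    ∃ S : Set (Cube d), IsSparse η S ∧
      ∀ g : Ed d → ℝ, Measurable g →
        ENNReal.ofReal |∫ x, g x * U f x| ≤ ENNReal.ofReal A * sparseForm β r S f g

def wMeasure (w : Ed d → ℝ) : Measure (Ed d) :=
  volume.withDensity fun x => ENNReal.ofReal (w x)

/-- Rough homogeneous singular integral, as a principal value. -/
def TOmega (Ω : Ed d → ℝ) (f : Ed d → ℝ) (x : Ed d) : ℝ :=
  limUnder (nhdsWithin (0:ℝ) (Set.Ioi 0)) fun ε =>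
    ∫ y in {y : Ed d | ε < dist x y}, Ω (x - y) / dist x y ^ d * f y

def HomZero (Ω : Ed d → ℝ) : Prop := ∀ t : ℝ, 0 < t → ∀ x, Ω (t • x) = Ω x

def MeanZero (Ω : Ed d → ℝ) : Prop :=
  ∫ x : Metric.sphere (0 : Ed d) 1, Ω x ∂(volume : Measure (Ed d)).toSphere = 0

/-- Grand maximal operator `𝓜_{T,r}`. -/
def grandM (T : (Ed d → ℝ) → Ed d → ℝ) (r : ℝ) (h : Ed d → ℝ) (x : Ed d) : ℝ≥0∞ :=
  ⨆ (Q : Cube d) (_ : x ∈ Q.carrier),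
    (lavg Q fun ξ =>
      ENNReal.ofReal |T (((Q.dilate 3 (by norm_num)).carrier)ᶜ.indicator h) ξ| ^ r) ^ (1 / r)

lemma cube_isClosed (Q : Cube d) : IsClosed Q.carrier := by
  have h : Q.carrier = ⋂ i, {x : Ed d | |x i - Q.center i| ≤ Q.halfside} := by
    ext x; simp [Cube.carrier]
  rw [h]
  refine isClosed_iInter fun i => isClosed_le ?_ continuous_const
  exact (((PiLp.continuous_apply 2 _ i).sub continuous_const).abs)

lemma cube_subset_closedBall (Q : Cube d) :
    Q.carrier ⊆ Metric.closedBall Q.center (Real.sqrt d * Q.halfside) := by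
  intro x hx
  rw [Metric.mem_closedBall, EuclideanSpace.dist_eq]
  have h1 : ∑ i, dist (x i) (Q.center i) ^ 2 ≤ (d : ℝ) * Q.halfside ^ 2 := by
    calc ∑ i, dist (x i) (Q.center i) ^ 2 ≤ ∑ _i : Fin d, Q.halfside ^ 2 := by
          refine Finset.sum_le_sum fun i _ => ?_
          have h2 : dist (x i) (Q.center i) ≤ Q.halfside := by
            rw [Real.dist_eq]; exact hx i
          nlinarith [dist_nonneg (x := x i) (y := Q.center i)]
      _ = (d : ℝ) * Q.halfside ^ 2 := by simp [Finset.sum_const, mul_comm]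
  calc Real.sqrt (∑ i, dist (x i) (Q.center i) ^ 2)
      ≤ Real.sqrt ((d : ℝ) * Q.halfside ^ 2) := Real.sqrt_le_sqrt h1
    _ = Real.sqrt d * Q.halfside := by
        rw [Real.sqrt_mul (by positivity), Real.sqrt_sq Q.halfside_pos.le]

lemma cube_vol_lt_top (Q : Cube d) : volume Q.carrier < ⊤ :=
  ((isCompact_closedBall Q.center _).of_isClosed_subset (cube_isClosed Q)
    (cube_subset_closedBall Q)).measure_lt_top

lemma cube_vol_pos (Q : Cube d) : 0 < volume Q.carrier := by
  have hopen : IsOpen {x : Ed d | ∀ i, |x i - Q.center i| < Q.halfside} := by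
    have h : {x : Ed d | ∀ i, |x i - Q.center i| < Q.halfside}
        = ⋂ i, {x : Ed d | |x i - Q.center i| < Q.halfside} := by
      ext x; simp
    rw [h]
    refine isOpen_iInter_of_finite fun i => ?_
    have hc : Continuous fun x : Ed d => |x i - Q.center i| :=
      ((PiLp.continuous_apply 2 _ i).sub continuous_const).abs
    exact isOpen_lt hc continuous_const
  have hsub : {x : Ed d | ∀ i, |x i - Q.center i| < Q.halfside} ⊆ Q.carrier :=
    fun x hx i => (hx i).le
  have hne : Q.center ∈ {x : Ed d | ∀ i, |x i - Q.center i| < Q.halfside} := by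
    intro i; simpa using Q.halfside_pos
  exact lt_of_lt_of_le (hopen.measure_pos volume ⟨_, hne⟩) (measure_mono hsub)

lemma elem_bound {β : ℝ} (hβ : 0 ≤ β) {s : ℝ} (hs : 1 < s) {u : ℝ} (hu : 0 ≤ u) :
    u * Real.log (Real.exp 1 + u) ^ β ≤
      2 ^ β * u + (4 ^ β * (1 + (β / (s - 1)) ^ β)) * u ^ s := by
  have he1 : (2:ℝ) ≤ Real.exp 1 := by have := Real.add_one_le_exp 1; linarith
  have hXnn : 0 ≤ (β / (s-1)) ^ β := Real.rpow_nonneg (div_nonneg hβ (by linarith)) β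
  have hexp2 : Real.exp 2 = Real.exp 1 * Real.exp 1 := by rw [← Real.exp_add]; norm_num
  have h2nn : (0:ℝ) ≤ 2 ^ β := Real.rpow_nonneg (by norm_num) β
  have h4nn : (0:ℝ) ≤ 4 ^ β := Real.rpow_nonneg (by norm_num) β
  rcases le_or_gt u 1 with h1 | h1
  · have hlog : Real.log (Real.exp 1 + u) ≤ 2 := by
      rw [Real.log_le_iff_le_exp (by nlinarith [Real.exp_pos 1])]
      nlinarith [sq_nonneg (Real.exp 1 - 1)]
    have hlognn : 0 ≤ Real.log (Real.exp 1 + u) := Real.log_nonneg (by linarith)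
    have hb : Real.log (Real.exp 1 + u) ^ β ≤ 2 ^ β := Real.rpow_le_rpow hlognn hlog hβ
    have h2 : u * Real.log (Real.exp 1 + u) ^ β ≤ 2 ^ β * u := by nlinarith
    have h3 : 0 ≤ (4 ^ β * (1 + (β / (s - 1)) ^ β)) * u ^ s :=
      mul_nonneg (mul_nonneg h4nn (by linarith)) (Real.rpow_nonneg hu s)
    linarith
  · have hu1 : (1:ℝ) ≤ u := h1.le
    have hupos : (0:ℝ) < u := lt_of_lt_of_le one_pos hu1
    have hlogu : 0 ≤ Real.log u := Real.log_nonneg hu1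
    have hLnn : 0 ≤ Real.log (Real.exp 1 + u) := Real.log_nonneg (by nlinarith)
    have hstep1 : Real.log (Real.exp 1 + u) ≤ 2 + Real.log u := by
      have key : Real.exp 1 + 1 ≤ Real.exp 1 * Real.exp 1 := by nlinarith
      have h2u : Real.exp 1 + u ≤ Real.exp 2 * u := by
        rw [hexp2]
        nlinarith [mul_le_mul_of_nonneg_right key hupos.le,
          mul_nonneg (Real.exp_pos 1).le (sub_nonneg.2 hu1)]
      calc Real.log (Real.exp 1 + u) ≤ Real.log (Real.exp 2 * u) :=
            Real.log_le_log (by positivity) h2u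
        _ = 2 + Real.log u := by
            rw [Real.log_mul (Real.exp_ne_zero 2) (ne_of_gt hupos), Real.log_exp]
    have hstep2 : Real.log (Real.exp 1 + u) ^ β ≤ 4 ^ β + 2 ^ β * Real.log u ^ β := by
      have hlognn : 0 ≤ 2 ^ β * Real.log u ^ β :=
        mul_nonneg h2nn (Real.rpow_nonneg hlogu β)
      rcases le_or_gt (Real.log u) 2 with h2 | h2
      · have hle : Real.log (Real.exp 1 + u) ≤ 4 := by linarith
        have := Real.rpow_le_rpow hLnn hle hβ
        linarith
      · have hle : Real.log (Real.exp 1 + u) ≤ 2 * Real.log u := by linarith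
        have h4 : Real.log (Real.exp 1 + u) ^ β ≤ (2 * Real.log u) ^ β :=
          Real.rpow_le_rpow hLnn hle hβ
        rw [Real.mul_rpow (by norm_num) hlogu] at h4
        linarith
    have hstep3 : Real.log u ^ β ≤ (β / (s - 1)) ^ β * u ^ (s - 1) := by
      rcases eq_or_lt_of_le hβ with hβ0 | hβpos
      · rw [← hβ0]
        simpa using Real.one_le_rpow hu1 (by linarith : (0:ℝ) ≤ s - 1)
      · set ε := (s - 1) / β with hε
        have hεpos : 0 < ε := div_pos (by linarith) hβpos
        have hlogle : Real.log u ≤ ε⁻¹ * u ^ ε := by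
          have h5 : Real.log (u ^ ε) ≤ u ^ ε - 1 :=
            Real.log_le_sub_one_of_pos (Real.rpow_pos_of_pos hupos ε)
          rw [Real.log_rpow hupos] at h5
          have h6 : ε * Real.log u ≤ u ^ ε := by linarith
          calc Real.log u = ε⁻¹ * (ε * Real.log u) := by field_simp
            _ ≤ ε⁻¹ * u ^ ε := mul_le_mul_of_nonneg_left h6 (by positivity)
        have h7 : Real.log u ^ β ≤ (ε⁻¹ * u ^ ε) ^ β := Real.rpow_le_rpow hlogu hlogle hβ
        rw [Real.mul_rpow (by positivity) (Real.rpow_nonneg hupos.le ε),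
          ← Real.rpow_mul hupos.le] at h7
        have hεβ : ε * β = s - 1 := by
          rw [hε]; field_simp
        have hinv : ε⁻¹ = β / (s - 1) := by rw [hε, inv_div]
        rwa [hεβ, hinv] at h7
    have huu : u * u ^ (s - 1) = u ^ s := by
      rw [Real.rpow_sub hupos, Real.rpow_one]
      field_simp
    have hus : u ≤ u ^ s := by
      have := Real.rpow_le_rpow_of_exponent_le hu1 (le_of_lt hs)
      rwa [Real.rpow_one] at this
    have h24 : (2:ℝ) ^ β ≤ 4 ^ β := Real.rpow_le_rpow (by norm_num) (by norm_num) hβ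
    calc u * Real.log (Real.exp 1 + u) ^ β
        ≤ u * (4 ^ β + 2 ^ β * Real.log u ^ β) :=
          mul_le_mul_of_nonneg_left hstep2 hupos.le
      _ = 4 ^ β * u + 2 ^ β * (u * Real.log u ^ β) := by ring
      _ ≤ 4 ^ β * u + 2 ^ β * (u * ((β / (s - 1)) ^ β * u ^ (s - 1))) := by
          have h8 := mul_le_mul_of_nonneg_left (mul_le_mul_of_nonneg_left hstep3 hupos.le) h2nn
          linarith
      _ = 4 ^ β * u + 2 ^ β * (β / (s - 1)) ^ β * (u * u ^ (s - 1)) := by ring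
      _ = 4 ^ β * u + 2 ^ β * (β / (s - 1)) ^ β * u ^ s := by rw [huu]
      _ ≤ 4 ^ β * u ^ s + 4 ^ β * (β / (s - 1)) ^ β * u ^ s := by
          have hus2 : 0 ≤ u ^ s := Real.rpow_nonneg hu s
          nlinarith [mul_le_mul_of_nonneg_left hus h4nn,
            mul_le_mul_of_nonneg_right (mul_le_mul_of_nonneg_right h24 hXnn) hus2]
      _ ≤ 2 ^ β * u + (4 ^ β * (1 + (β / (s - 1)) ^ β)) * u ^ s := by
          nlinarith [mul_nonneg h2nn hu]

end Rough

open MeasureTheory ENNReal Rough in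
theorem stmt4 (β : ℝ) (hβ : 0 ≤ β) :
    ∃ C : ℝ, 0 < C ∧
      ∀ (d : ℕ) (s : ℝ), 1 < s → ∀ (Q : Cube d) (f : Ed d → ℝ), Measurable f →
        ENNReal.ofReal (luxNorm β Q f) ≤
          ENNReal.ofReal (C * (1 + (β / (s - 1)) ^ β)) *
            ((volume Q.carrier)⁻¹ *
              ∫⁻ x in Q.carrier, ENNReal.ofReal (|f x| ^ s)) ^ (1 / s) := by
  refine ⟨4 ^ (β + 1), by positivity, ?_⟩
  intro d s hs Q f hf
  have hs0 : (0:ℝ) < s := by linarith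
  have hsinv : (0:ℝ) < 1 / s := by positivity
  set X : ℝ := (β / (s - 1)) ^ β with hX
  have hX0 : 0 ≤ X := Real.rpow_nonneg (div_nonneg hβ (by linarith)) β
  set K : ℝ := 4 ^ β * (1 + X) with hK
  have h4b : (0:ℝ) < 4 ^ β := Real.rpow_pos_of_pos (by norm_num) β
  have hKpos : 0 < K := by nlinarith
  set c : ℝ := 4 ^ (β + 1) * (1 + X) with hc
  have hc4K : c = 4 * K := by
    rw [hc, hK, Real.rpow_add (by norm_num), Real.rpow_one]; ring
  have hcpos : 0 < c := by nlinarith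
  have hc1 : 1 ≤ c := by
    have h1 : (1:ℝ) ≤ 4 ^ (β + 1) := Real.one_le_rpow (by norm_num) (by linarith)
    nlinarith
  set V := volume Q.carrier with hV
  have hV0 : V ≠ 0 := (cube_vol_pos Q).ne'
  have hVt : V ≠ ⊤ := (cube_vol_lt_top Q).ne
  set I := ∫⁻ x in Q.carrier, ENNReal.ofReal (|f x| ^ s) with hI
  set S : Set ℝ := {r : ℝ | 0 < r ∧
    (∫⁻ x in Q.carrier,
      ENNReal.ofReal (|f x| / r * Real.log (Real.exp 1 + |f x| / r) ^ β))
      ≤ volume Q.carrier} with hS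
  have hlux : luxNorm β Q f = sInf S := rfl
  have hbdd : BddBelow S := ⟨0, fun y hy => hy.1.le⟩
  rcases eq_or_ne I ⊤ with hItop | hIt
  · have h1 : (V⁻¹ * I) ^ (1 / s) = ⊤ := by
      rw [hItop, ENNReal.mul_top (ENNReal.inv_ne_zero.2 hVt)]
      exact ENNReal.top_rpow_of_pos hsinv
    rw [h1, ENNReal.mul_top (by simp [hcpos.ne', not_le, hcpos.le]; linarith)]
    exact le_top
  have hmeas2 : Measurable fun x => ENNReal.ofReal (|f x| ^ s) := by fun_prop
  rcases eq_or_ne I 0 with hI0 | hI0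
  · -- f vanishes a.e. on Q
    have h0' : (∫⁻ x in Q.carrier, ENNReal.ofReal (|f x| ^ s)) = 0 := by
      rw [← hI]; exact hI0
    have hae : ∀ᵐ x ∂(volume.restrict Q.carrier), |f x| = 0 := by
      have h0 := (lintegral_eq_zero_iff hmeas2).1 h0'
      filter_upwards [h0] with x hx
      have h1 : |f x| ^ s ≤ 0 := ENNReal.ofReal_eq_zero.1 hx
      have h2 : |f x| ^ s = 0 := le_antisymm h1 (Real.rpow_nonneg (abs_nonneg _) s)
      exact ((Real.rpow_eq_zero (abs_nonneg _) hs0.ne').1 h2)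
    have hmem : ∀ r : ℝ, 0 < r → r ∈ S := by
      intro r hr
      refine ⟨hr, ?_⟩
      have hcongr : (fun x => ENNReal.ofReal
          (|f x| / r * Real.log (Real.exp 1 + |f x| / r) ^ β))
          =ᵐ[volume.restrict Q.carrier] (fun _ => (0:ℝ≥0∞)) := by
        filter_upwards [hae] with x hx
        rw [hx]
        simp
      rw [lintegral_congr_ae hcongr, lintegral_zero]
      exact zero_le
    have hinf : sInf S ≤ 0 := by
      refine le_of_forall_pos_le_add fun ε hε => ?_
      simpa using csInf_le hbdd (hmem ε hε)
    have hz : ENNReal.ofReal (luxNorm β Q f) = 0 := by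
      rw [hlux]; exact ENNReal.ofReal_eq_zero.2 hinf
    rw [hz]; exact zero_le
  -- main case: 0 < I < ⊤
  set P := (V⁻¹ * I) ^ (1 / s) with hP
  have hVI0 : V⁻¹ * I ≠ 0 := mul_ne_zero (ENNReal.inv_ne_zero.2 hVt) hI0
  have hVIt : V⁻¹ * I ≠ ⊤ := ENNReal.mul_ne_top (ENNReal.inv_ne_top.2 hV0) hIt
  have hP0 : P ≠ 0 := (ENNReal.rpow_pos (pos_iff_ne_zero.2 hVI0) hVIt).ne'
  have hPt : P ≠ ⊤ := ENNReal.rpow_ne_top_of_nonneg hsinv.le hVIt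
  set A := P.toReal with hA
  have hA0 : 0 < A := ENNReal.toReal_pos hP0 hPt
  have hAP : ENNReal.ofReal A = P := ENNReal.ofReal_toReal hPt
  set t : ℝ := c * A with htdef
  have ht0 : 0 < t := mul_pos hcpos hA0
  have hoft : ENNReal.ofReal t = ENNReal.ofReal c * P := by
    rw [htdef, ENNReal.ofReal_mul hcpos.le, hAP]
  have hofc0 : ENNReal.ofReal c ≠ 0 := (ENNReal.ofReal_pos.2 hcpos).ne'
  have hofct : ENNReal.ofReal c ≠ ⊤ := ENNReal.ofReal_ne_top
  have hVs0 : V ^ (1/s) ≠ 0 := (ENNReal.rpow_pos (pos_iff_ne_zero.2 hV0) hVt).ne'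
  have hVst : V ^ (1/s) ≠ ⊤ := ENNReal.rpow_ne_top_of_nonneg hsinv.le hVt
  have hIP : I ^ (1/s) = P * V ^ (1/s) := by
    rw [hP, ENNReal.mul_rpow_of_ne_top (ENNReal.inv_ne_top.2 hV0) hIt,
      ENNReal.inv_rpow]
    rw [mul_comm ((V ^ (1/s))⁻¹) _, mul_assoc, ENNReal.inv_mul_cancel hVs0 hVst,
      mul_one]
  have hofts : ENNReal.ofReal (t ^ s) = ENNReal.ofReal c ^ s * (V⁻¹ * I) := by
    rw [← ENNReal.ofReal_rpow_of_pos ht0, hoft,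
      ENNReal.mul_rpow_of_ne_top hofct hPt, hP, ← ENNReal.rpow_mul,
      one_div_mul_cancel hs0.ne', ENNReal.rpow_one]
  -- membership of t in S
  set c1 : ℝ≥0∞ := ENNReal.ofReal (2 ^ β) / ENNReal.ofReal t with hc1def
  set c2 : ℝ≥0∞ := ENNReal.ofReal K / ENNReal.ofReal (t ^ s) with hc2def
  have h2nn : (0:ℝ) ≤ 2 ^ β := Real.rpow_nonneg (by norm_num) β
  have hpt : ∀ x : Ed d,
      ENNReal.ofReal (|f x| / t * Real.log (Real.exp 1 + |f x| / t) ^ β)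
        ≤ c1 * ENNReal.ofReal (|f x|) + c2 * ENNReal.ofReal (|f x| ^ s) := by
    intro x
    have hu : (0:ℝ) ≤ |f x| / t := div_nonneg (abs_nonneg _) ht0.le
    have h1 := elem_bound hβ hs hu
    calc ENNReal.ofReal (|f x| / t * Real.log (Real.exp 1 + |f x| / t) ^ β)
        ≤ ENNReal.ofReal (2 ^ β * (|f x| / t) + K * (|f x| / t) ^ s) :=
          ENNReal.ofReal_le_ofReal h1
      _ = c1 * ENNReal.ofReal (|f x|) + c2 * ENNReal.ofReal (|f x| ^ s) := by
          rw [ENNReal.ofReal_add (mul_nonneg h2nn hu)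
            (mul_nonneg hKpos.le (Real.rpow_nonneg hu s))]
          congr 1
          · rw [ENNReal.ofReal_mul h2nn, ENNReal.ofReal_div_of_pos ht0, hc1def,
              div_eq_mul_inv, div_eq_mul_inv]
            ring
          · rw [Real.div_rpow (abs_nonneg _) ht0.le, ENNReal.ofReal_mul hKpos.le,
              ENNReal.ofReal_div_of_pos (Real.rpow_pos_of_pos ht0 s), hc2def,
              div_eq_mul_inv, div_eq_mul_inv]
            ring
  have hc1t : c1 ≠ ⊤ :=
    (ENNReal.div_lt_top ENNReal.ofReal_ne_top (ENNReal.ofReal_pos.2 ht0).ne').ne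
  have hc2t : c2 ≠ ⊤ :=
    (ENNReal.div_lt_top ENNReal.ofReal_ne_top
      (ENNReal.ofReal_pos.2 (Real.rpow_pos_of_pos ht0 s)).ne').ne
  have hmeas1 : Measurable fun x => ENNReal.ofReal (|f x|) := by fun_prop
  set J1 := ∫⁻ x in Q.carrier, ENNReal.ofReal (|f x|) with hJ1
  have hJsplit : (∫⁻ x in Q.carrier,
      ENNReal.ofReal (|f x| / t * Real.log (Real.exp 1 + |f x| / t) ^ β))
      ≤ c1 * J1 + c2 * I := by
    calc (∫⁻ x in Q.carrier,
        ENNReal.ofReal (|f x| / t * Real.log (Real.exp 1 + |f x| / t) ^ β))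
        ≤ ∫⁻ x in Q.carrier,
            (c1 * ENNReal.ofReal (|f x|) + c2 * ENNReal.ofReal (|f x| ^ s)) :=
          lintegral_mono hpt
      _ = (∫⁻ x in Q.carrier, c1 * ENNReal.ofReal (|f x|)) +
            ∫⁻ x in Q.carrier, c2 * ENNReal.ofReal (|f x| ^ s) :=
          lintegral_add_left (measurable_const.mul hmeas1) _
      _ = c1 * J1 + c2 * I := by
          rw [lintegral_const_mul' _ _ hc1t, lintegral_const_mul' _ _ hc2t, hJ1, hI]
  -- Hölder
  have hconj : s.HolderConjugate (s / (s - 1)) := Real.HolderConjugate.conjExponent hs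
  have holder : J1 ≤ I ^ (1/s) * V ^ (1 - 1/s) := by
    have h := ENNReal.lintegral_mul_le_Lp_mul_Lq (volume.restrict Q.carrier) hconj
      hmeas1.aemeasurable (aemeasurable_const (b := (1:ℝ≥0∞)))
    simp only [Pi.mul_apply, mul_one, ENNReal.one_rpow] at h
    rw [setLIntegral_one] at h
    have hq : 1 / (s / (s - 1)) = 1 - 1/s := by
      field_simp
    have hcg : (∫⁻ x in Q.carrier, ENNReal.ofReal (|f x|) ^ s) = I := by
      rw [hI]
      refine lintegral_congr fun x => ?_
      rw [ENNReal.ofReal_rpow_of_nonneg (abs_nonneg _) hs0.le]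
    rw [hq, hcg] at h
    exact h
  -- term bounds
  have hterm1 : c1 * (I ^ (1/s) * V ^ (1 - 1/s)) ≤ 2⁻¹ * V := by
    have hVV : V ^ (1/s) * V ^ (1 - 1/s) = V := by
      rw [← ENNReal.rpow_add _ _ hV0 hVt]
      norm_num
    have heq : c1 * (I ^ (1/s) * V ^ (1 - 1/s)) =
        ENNReal.ofReal (2 ^ β) * (ENNReal.ofReal c)⁻¹ * V := by
      rw [hc1def, hoft, hIP, div_eq_mul_inv,
        ENNReal.mul_inv (Or.inl hofc0) (Or.inl hofct)]
      calc ENNReal.ofReal (2 ^ β) * ((ENNReal.ofReal c)⁻¹ * P⁻¹) *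
            (P * V ^ (1/s) * V ^ (1 - 1/s))
          = ENNReal.ofReal (2 ^ β) * (ENNReal.ofReal c)⁻¹ * (P⁻¹ * P) *
              (V ^ (1/s) * V ^ (1 - 1/s)) := by ring
        _ = ENNReal.ofReal (2 ^ β) * (ENNReal.ofReal c)⁻¹ * V := by
            rw [ENNReal.inv_mul_cancel hP0 hPt, hVV, mul_one]
    rw [heq]
    have hb : ENNReal.ofReal (2 ^ β) ≤ 2⁻¹ * ENNReal.ofReal c := by
      have hr : 2 * 2 ^ β ≤ c := by
        have h24 : (2:ℝ) ^ β ≤ 4 ^ β :=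
          Real.rpow_le_rpow (by norm_num) (by norm_num) hβ
        rw [hc4K, hK]
        nlinarith
      have h1 : (2:ℝ≥0∞) * ENNReal.ofReal (2 ^ β) ≤ ENNReal.ofReal c := by
        rw [show (2:ℝ≥0∞) = ENNReal.ofReal 2 by simp,
          ← ENNReal.ofReal_mul (by norm_num)]
        exact ENNReal.ofReal_le_ofReal hr
      calc ENNReal.ofReal (2 ^ β)
          = 2⁻¹ * (2 * ENNReal.ofReal (2 ^ β)) := by
            rw [← mul_assoc, ENNReal.inv_mul_cancel (by norm_num) (by norm_num),
              one_mul]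
        _ ≤ 2⁻¹ * ENNReal.ofReal c := mul_le_mul_right h1 _
    calc ENNReal.ofReal (2 ^ β) * (ENNReal.ofReal c)⁻¹ * V
        ≤ 2⁻¹ * ENNReal.ofReal c * (ENNReal.ofReal c)⁻¹ * V := by
          exact mul_le_mul_left (mul_le_mul_left hb _) _
      _ = 2⁻¹ * (ENNReal.ofReal c * (ENNReal.ofReal c)⁻¹) * V := by ring
      _ = 2⁻¹ * V := by rw [ENNReal.mul_inv_cancel hofc0 hofct, mul_one]
  have hofcs0 : ENNReal.ofReal c ^ s ≠ 0 := by
    simp only [ne_eq, ENNReal.rpow_eq_zero_iff, not_or]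
    constructor
    · rintro ⟨h1, -⟩; exact hofc0 h1
    · rintro ⟨h1, -⟩; exact hofct h1
  have hofcst : ENNReal.ofReal c ^ s ≠ ⊤ := ENNReal.rpow_ne_top_of_nonneg hs0.le hofct
  have hterm2 : c2 * I ≤ 4⁻¹ * V := by
    have heq : c2 * I = ENNReal.ofReal K * (ENNReal.ofReal c ^ s)⁻¹ * V := by
      rw [hc2def, hofts, div_eq_mul_inv,
        ENNReal.mul_inv (Or.inl hofcs0) (Or.inl hofcst),
        ENNReal.mul_inv (Or.inr hIt) (Or.inr hI0), inv_inv]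
      calc ENNReal.ofReal K * ((ENNReal.ofReal c ^ s)⁻¹ * (V * I⁻¹)) * I
          = ENNReal.ofReal K * (ENNReal.ofReal c ^ s)⁻¹ * V * (I⁻¹ * I) := by ring
        _ = ENNReal.ofReal K * (ENNReal.ofReal c ^ s)⁻¹ * V := by
            rw [ENNReal.inv_mul_cancel hI0 hIt, mul_one]
    rw [heq]
    have hb : ENNReal.ofReal K ≤ 4⁻¹ * ENNReal.ofReal c ^ s := by
      have h1 : (4:ℝ≥0∞) * ENNReal.ofReal K ≤ ENNReal.ofReal c ^ s := by
        have h2 : (4:ℝ≥0∞) * ENNReal.ofReal K = ENNReal.ofReal c := by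
          rw [show (4:ℝ≥0∞) = ENNReal.ofReal 4 by simp,
            ← ENNReal.ofReal_mul (by norm_num), ← hc4K]
        rw [h2]
        calc ENNReal.ofReal c = ENNReal.ofReal c ^ (1:ℝ) := by rw [ENNReal.rpow_one]
          _ ≤ ENNReal.ofReal c ^ s :=
            ENNReal.rpow_le_rpow_of_exponent_le (ENNReal.one_le_ofReal.2 hc1) hs.le
      calc ENNReal.ofReal K
          = 4⁻¹ * (4 * ENNReal.ofReal K) := by
            rw [← mul_assoc, ENNReal.inv_mul_cancel (by norm_num) (by norm_num),
              one_mul]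
        _ ≤ 4⁻¹ * ENNReal.ofReal c ^ s := mul_le_mul_right h1 _
    calc ENNReal.ofReal K * (ENNReal.ofReal c ^ s)⁻¹ * V
        ≤ 4⁻¹ * ENNReal.ofReal c ^ s * (ENNReal.ofReal c ^ s)⁻¹ * V :=
          mul_le_mul_left (mul_le_mul_left hb _) _
      _ = 4⁻¹ * (ENNReal.ofReal c ^ s * (ENNReal.ofReal c ^ s)⁻¹) * V := by ring
      _ = 4⁻¹ * V := by rw [ENNReal.mul_inv_cancel hofcs0 hofcst, mul_one]
  have htS : t ∈ S := by
    refine ⟨ht0, ?_⟩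
    calc (∫⁻ x in Q.carrier,
        ENNReal.ofReal (|f x| / t * Real.log (Real.exp 1 + |f x| / t) ^ β))
        ≤ c1 * J1 + c2 * I := hJsplit
      _ ≤ c1 * (I ^ (1/s) * V ^ (1 - 1/s)) + c2 * I :=
          add_le_add_left (mul_le_mul_right holder _) _
      _ ≤ 2⁻¹ * V + 4⁻¹ * V := add_le_add hterm1 hterm2
      _ ≤ 1 * V := by
          rw [← add_mul]
          refine mul_le_mul_left ?_ _
          rw [show ((2:ℝ≥0∞))⁻¹ = ENNReal.ofReal 2⁻¹ by
              rw [ENNReal.ofReal_inv_of_pos (by norm_num)]; simp,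
            show ((4:ℝ≥0∞))⁻¹ = ENNReal.ofReal 4⁻¹ by
              rw [ENNReal.ofReal_inv_of_pos (by norm_num)]; simp,
            ← ENNReal.ofReal_add (by norm_num) (by norm_num)]
          calc ENNReal.ofReal (2⁻¹ + 4⁻¹) ≤ ENNReal.ofReal 1 :=
              ENNReal.ofReal_le_ofReal (by norm_num)
            _ = 1 := by simp
      _ = V := one_mul V
  have hfin : luxNorm β Q f ≤ t := by
    rw [hlux]; exact csInf_le hbdd htS
  calc ENNReal.ofReal (luxNorm β Q f) ≤ ENNReal.ofReal t :=
      ENNReal.ofReal_le_ofReal hfin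
    _ = ENNReal.ofReal c * P := hoft
end
end

section
/- (Weak-type transfer for the truncated maximal operator $M_\tau$.) Let $\tau\in(0,1)$ and let $F$ be a nonnegative measurable function. Then for all $\lambda>0$, $\big|\{x: M_\tau F(x)>\lambda\}\big| \le \frac{C_{d,\tau}}{\lambda} \sup_{t\ge 2^{-1/\tau}\lambda} t\, \big|\{x: F(x)>t\}\big|$, where $M_\tau F=(M(F^\tau))^{1/\tau}$ and $M$ is the Hardy–Littlewood maximal operator. -/
open MeasureTheory ENNReal Filter Set

noncomputable section

namespace Rough

variable {d : ℕ}

namespace AuxRough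
open Rough Metric

variable {d : ℕ}

lemma center_mem (Q : Cube d) : Q.center ∈ Q.carrier := by
  intro i; simp [Q.halfside_pos.le]

lemma closedBall_subset_carrier (Q : Cube d) :
    closedBall Q.center Q.halfside ⊆ Q.carrier := by
  intro y hy i
  have h1 : dist (y i) (Q.center i) ≤ dist y Q.center := by
    rw [EuclideanSpace.dist_eq]
    have h2 : dist (y i) (Q.center i) = Real.sqrt (dist (y i) (Q.center i) ^ 2) :=
      (Real.sqrt_sq dist_nonneg).symm
    rw [h2]
    exact Real.sqrt_le_sqrt (Finset.single_le_sum
      (f := fun j => dist (y j) (Q.center j) ^ 2) (fun j _ => sq_nonneg _) (Finset.mem_univ i))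
  calc |y i - Q.center i| = dist (y i) (Q.center i) := (Real.dist_eq _ _).symm
    _ ≤ dist y Q.center := h1
    _ ≤ Q.halfside := mem_closedBall.mp hy

lemma carrier_subset_closedBall (Q : Cube d) {x : Ed d} (hx : x ∈ Q.carrier) :
    Q.carrier ⊆ closedBall x ((1 + 2 * Real.sqrt d) * Q.halfside) := by
  intro y hy
  rw [mem_closedBall, dist_comm, EuclideanSpace.dist_eq]
  have hb : ∀ i, dist (x i) (y i) ≤ 2 * Q.halfside := by
    intro i
    rw [Real.dist_eq]
    calc |x i - y i| ≤ |x i - Q.center i| + |Q.center i - y i| := abs_sub_le _ _ _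
      _ ≤ Q.halfside + Q.halfside := by
          refine add_le_add (hx i) ?_
          rw [abs_sub_comm]; exact hy i
      _ = 2 * Q.halfside := by ring
  have hsum : (∑ i, dist (x i) (y i) ^ 2) ≤ (d : ℝ) * (2 * Q.halfside) ^ 2 := by
    calc (∑ i, dist (x i) (y i) ^ 2) ≤ ∑ _i : Fin d, (2 * Q.halfside) ^ 2 :=
          Finset.sum_le_sum fun i _ => pow_le_pow_left₀ dist_nonneg (hb i) 2
      _ = (d : ℝ) * (2 * Q.halfside) ^ 2 := by
          simp [Finset.sum_const, Finset.card_univ]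
  have h0 : (0:ℝ) < Q.halfside := Q.halfside_pos
  calc Real.sqrt (∑ i, dist (x i) (y i) ^ 2) ≤ Real.sqrt ((d : ℝ) * (2 * Q.halfside) ^ 2) :=
        Real.sqrt_le_sqrt hsum
    _ = Real.sqrt d * (2 * Q.halfside) := by
        rw [Real.sqrt_mul (Nat.cast_nonneg d), Real.sqrt_sq (by positivity)]
    _ ≤ (1 + 2 * Real.sqrt d) * Q.halfside := by nlinarith [Real.sqrt_nonneg (d:ℝ)]

lemma measurableSet_carrier (Q : Cube d) : MeasurableSet Q.carrier := by
  have h : Q.carrier = ⋂ i, {x : Ed d | |x i - Q.center i| ≤ Q.halfside} := by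
    ext x; simp [Rough.Cube.carrier, Set.mem_iInter]
  rw [h]
  refine MeasurableSet.iInter fun i => ?_
  have hm : Measurable fun x : Ed d => x i :=
    (EuclideanSpace.proj i : Ed d →L[ℝ] ℝ).continuous.measurable
  exact measurableSet_le ((hm.sub measurable_const).abs) measurable_const

lemma vol_carrier_pos (Q : Cube d) : 0 < volume Q.carrier :=
  lt_of_lt_of_le (measure_closedBall_pos volume Q.center Q.halfside_pos)
    (measure_mono (closedBall_subset_carrier Q))

lemma vol_carrier_ne_top (Q : Cube d) : volume Q.carrier ≠ ⊤ :=
  ((measure_mono (carrier_subset_closedBall Q (center_mem Q))).trans_lt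
    measure_closedBall_lt_top).ne

lemma ediv_mul (a b c : ℝ≥0∞) : a / b * c = a * c / b := by
  rw [div_eq_mul_inv, div_eq_mul_inv, mul_right_comm]

lemma lavg_key {g : Ed d → ℝ≥0∞} {α : ℝ≥0∞} {Q : Cube d} (h : α < lavg Q g) :
    α * volume Q.carrier ≤ ∫⁻ x in Q.carrier, g x := by
  have h' : α < (volume Q.carrier)⁻¹ * ∫⁻ x in Q.carrier, g x := h
  have h2 := mul_le_mul_left h'.le (volume Q.carrier)
  rwa [mul_comm (volume Q.carrier)⁻¹, mul_assoc,
    ENNReal.inv_mul_cancel (vol_carrier_pos Q).ne' (vol_carrier_ne_top Q), mul_one] at h2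

lemma weak11 (g : Ed d → ℝ≥0∞) (α : ℝ≥0∞) (hα : α ≠ 0) :
    volume {x | α < maximal g x} ≤
      ENNReal.ofReal (4 ^ d * (1 + 2 * Real.sqrt d) ^ d) / α * ∫⁻ x, g x := by
  set Kr : ℝ := (1 + 2 * Real.sqrt d) ^ d with hKrdef
  have hKr1 : (1:ℝ) ≤ Kr := one_le_pow₀ (by nlinarith [Real.sqrt_nonneg (d:ℝ)])
  have hCpos : (0:ℝ) < 4 ^ d * Kr := mul_pos (by positivity) (lt_of_lt_of_le one_pos hKr1)
  set E := {x | α < maximal g x} with hE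
  by_cases hαt : α = ⊤
  · have hEe : E = ∅ := by
      refine eq_empty_of_forall_notMem fun x hx => ?_
      have hx' : α < maximal g x := hx
      rw [hαt] at hx'
      exact not_top_lt hx'
    simp [hEe]
  set ν := volume.withDensity g with hν
  have hνuniv : ν univ = ∫⁻ x, g x := by
    rw [hν, withDensity_apply _ MeasurableSet.univ, Measure.restrict_univ]
  by_cases hI : ∫⁻ x, g x = ⊤
  · have hne : ENNReal.ofReal (4 ^ d * Kr) / α ≠ 0 := by
      simp only [Ne, ENNReal.div_eq_zero_iff, not_or]
      exact ⟨by simp [ENNReal.ofReal_eq_zero]; nlinarith, hαt⟩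
    rw [hI, ENNReal.mul_top hne]; exact le_top
  have hch : ∀ x : E, ∃ Q : Cube d, (x : Ed d) ∈ Q.carrier ∧ α < lavg Q g := by
    rintro ⟨x, hx⟩
    have hx' : α < maximal g x := hx
    rw [Rough.maximal, lt_iSup_iff] at hx'
    obtain ⟨Q, hQ⟩ := hx'
    rw [lt_iSup_iff] at hQ
    exact ⟨Q, hQ.1, hQ.2⟩
  choose Qx hmem havg using hch
  set ρ : E → ℝ := fun x => (1 + 2 * Real.sqrt d) * (Qx x).halfside with hρ
  have hρpos : ∀ x : E, 0 < ρ x := fun x => mul_pos (by positivity) (Qx x).halfside_pos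
  have key : ∀ x : E, α * volume (closedBall (x : Ed d) (ρ x)) ≤
      ENNReal.ofReal Kr * ν (closedBall (x : Ed d) (ρ x)) := by
    intro x
    have h1 : α * volume (Qx x).carrier ≤ ν (Qx x).carrier := by
      rw [hν, withDensity_apply _ (measurableSet_carrier _)]
      exact lavg_key (havg x)
    have h2 : volume (closedBall (x : Ed d) (ρ x)) ≤
        ENNReal.ofReal Kr * volume (Qx x).carrier := by
      rw [Measure.addHaar_closedBall' volume _ (hρpos x).le, finrank_euclideanSpace_fin]
      have he : (ρ x) ^ d = Kr * (Qx x).halfside ^ d := mul_pow _ _ _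
      rw [he, ENNReal.ofReal_mul (by positivity), mul_assoc]
      refine mul_le_mul_right ?_ _
      have hcb : ENNReal.ofReal ((Qx x).halfside ^ d) * volume (closedBall (0 : Ed d) 1) =
          volume (closedBall (Qx x).center (Qx x).halfside) := by
        rw [Measure.addHaar_closedBall' volume (Qx x).center (Qx x).halfside_pos.le,
          finrank_euclideanSpace_fin]
      rw [hcb]
      exact measure_mono (closedBall_subset_carrier _)
    have h3 : ν (Qx x).carrier ≤ ν (closedBall (x : Ed d) (ρ x)) :=
      measure_mono (carrier_subset_closedBall _ (hmem x))
    calc α * volume (closedBall (x:Ed d) (ρ x))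
        ≤ α * (ENNReal.ofReal Kr * volume (Qx x).carrier) := mul_le_mul_right h2 _
      _ = ENNReal.ofReal Kr * (α * volume (Qx x).carrier) := by ring
      _ ≤ ENNReal.ofReal Kr * ν (Qx x).carrier := mul_le_mul_right h1 _
      _ ≤ _ := mul_le_mul_right h3 _
  have key2 : ∀ x : E, volume (closedBall (x:Ed d) (ρ x)) ≤
      ENNReal.ofReal Kr / α * ν (closedBall (x:Ed d) (ρ x)) := by
    intro x
    rw [ediv_mul, ENNReal.le_div_iff_mul_le (Or.inl hα) (Or.inl hαt), mul_comm]
    exact key x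
  rcases Nat.eq_zero_or_pos d with hd | hd
  · subst hd
    haveI : Subsingleton (Ed 0) := ⟨fun a b => by ext i; exact i.elim0⟩
    by_cases hEe : E = ∅
    · simp [hEe]
    obtain ⟨x0, hx0⟩ := nonempty_iff_ne_empty.mpr hEe
    set x : E := ⟨x0, hx0⟩ with hxdef
    have hball : closedBall (x0 : Ed 0) (ρ x) = univ := by
      apply eq_univ_of_forall; intro y
      rw [mem_closedBall]
      have hyx : y = x0 := Subsingleton.elim _ _
      rw [hyx, dist_self]; exact (hρpos x).le
    have hk2 := key2 x
    rw [hball] at hk2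
    have hEuniv : volume E ≤ volume univ := measure_mono (subset_univ E)
    refine le_trans hEuniv (le_trans hk2 ?_)
    rw [hνuniv]
    refine mul_le_mul_left (ENNReal.div_le_div_right (ENNReal.ofReal_le_ofReal ?_) _) _
    nlinarith
  · set c1 := volume (closedBall (0 : Ed d) 1) with hc1
    have hc1pos : 0 < c1 := measure_closedBall_pos volume _ one_pos
    have hc1top : c1 ≠ ⊤ := measure_closedBall_lt_top.ne
    set M : ℝ≥0∞ := ENNReal.ofReal Kr * ν univ / α / c1 with hM
    have hMtop : M ≠ ⊤ := by
      refine (ENNReal.div_lt_top ((ENNReal.div_lt_top ?_ hα).ne) hc1pos.ne').ne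
      exact ENNReal.mul_ne_top ENNReal.ofReal_ne_top (hνuniv ▸ hI)
    have hbound : ∀ x : E, ENNReal.ofReal (ρ x ^ d) ≤ M := by
      intro x
      rw [hM, ENNReal.le_div_iff_mul_le (Or.inl hc1pos.ne') (Or.inl hc1top),
          ENNReal.le_div_iff_mul_le (Or.inl hα) (Or.inl hαt)]
      calc ENNReal.ofReal (ρ x ^ d) * c1 * α = α * (ENNReal.ofReal (ρ x ^ d) * c1) := by ring
        _ = α * volume (closedBall (x:Ed d) (ρ x)) := by
            rw [Measure.addHaar_closedBall' volume _ (hρpos x).le, finrank_euclideanSpace_fin]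
        _ ≤ ENNReal.ofReal Kr * ν (closedBall (x:Ed d) (ρ x)) := key x
        _ ≤ ENNReal.ofReal Kr * ν univ := mul_le_mul_right (measure_mono (subset_univ _)) _
    set R : ℝ := max 1 M.toReal with hR
    have hρR : ∀ x : E, ρ x ≤ R := by
      intro x
      rcases le_or_gt (ρ x) 1 with h | h
      · exact h.trans (le_max_left _ _)
      · have h1 : ρ x ≤ ρ x ^ d := le_self_pow₀ h.le hd.ne'
        have h2 : ρ x ^ d ≤ M.toReal := by
          have h3 := hbound x
          rwa [ENNReal.ofReal_le_iff_le_toReal hMtop] at h3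
        exact (h1.trans h2).trans (le_max_right _ _)
    obtain ⟨u, hu_sub, hu_disj, hu_cov⟩ :=
      Vitali.exists_disjoint_subfamily_covering_enlargement_closedBall (univ : Set E)
        (fun x : E => (x : Ed d)) ρ R (fun a _ => hρR a) 4 (by norm_num)
    have hEcov : E ⊆ ⋃ b ∈ u, closedBall (b : Ed d) (4 * ρ b) := by
      intro a ha
      obtain ⟨b, hb, hsub⟩ := hu_cov ⟨a, ha⟩ (mem_univ _)
      exact mem_biUnion hb (hsub (mem_closedBall_self (hρpos _).le))
    have hdisj : Pairwise (Function.onFun Disjoint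
        fun b : u => closedBall ((b : E) : Ed d) (ρ (b : E))) := by
      intro b c hbc
      exact hu_disj b.2 c.2 (fun h => hbc (Subtype.ext h))
    have hcnt : u.Countable := by
      have hcc := MeasureTheory.Measure.countable_meas_pos_of_disjoint_iUnion₀
        (μ := (volume : Measure (Ed d)))
        (As := fun b : u => closedBall ((b : E) : Ed d) (ρ (b : E)))
        (fun b => measurableSet_closedBall.nullMeasurableSet)
        (fun b c hbc => (hdisj hbc).aedisjoint)
      have huniv : {i : u | 0 < volume (closedBall ((i : E) : Ed d) (ρ (i : E)))} = univ :=
        eq_univ_of_forall fun b => measure_closedBall_pos volume _ (hρpos _)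
      rw [huniv] at hcc
      haveI : Countable u := Set.countable_univ_iff.mp hcc
      exact Set.countable_coe_iff.mp this
    have hscale : ∀ b : u, volume (closedBall ((b : E) : Ed d) (4 * ρ (b : E))) =
        ENNReal.ofReal (4 ^ d) * volume (closedBall ((b : E) : Ed d) (ρ (b : E))) := by
      intro b
      rw [Measure.addHaar_closedBall' volume _ (by linarith [hρpos (b : E)] : (0:ℝ) ≤ 4 * ρ (b : E)),
          Measure.addHaar_closedBall' volume _ (hρpos _).le, finrank_euclideanSpace_fin,
          mul_pow, ENNReal.ofReal_mul (by positivity), mul_assoc]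
    calc volume E ≤ volume (⋃ b ∈ u, closedBall (b : Ed d) (4 * ρ b)) := measure_mono hEcov
      _ ≤ ∑' b : u, volume (closedBall ((b : E) : Ed d) (4 * ρ (b : E))) :=
          measure_biUnion_le volume hcnt _
      _ = ∑' b : u, ENNReal.ofReal (4 ^ d) *
            volume (closedBall ((b : E) : Ed d) (ρ (b : E))) := tsum_congr hscale
      _ ≤ ∑' b : u, ENNReal.ofReal (4 ^ d) * (ENNReal.ofReal Kr / α *
            ν (closedBall ((b : E) : Ed d) (ρ (b : E)))) :=
          ENNReal.tsum_le_tsum fun b => mul_le_mul_right (key2 _) _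
      _ = ENNReal.ofReal (4 ^ d) * (ENNReal.ofReal Kr / α) *
            ∑' b : u, ν (closedBall ((b : E) : Ed d) (ρ (b : E))) := by
          simp_rw [← mul_assoc]; rw [ENNReal.tsum_mul_left]
      _ ≤ ENNReal.ofReal (4 ^ d) * (ENNReal.ofReal Kr / α) * ν univ := by
          refine mul_le_mul_right ?_ _
          exact le_trans (tsum_meas_le_meas_iUnion_of_disjoint ν
            (fun b => measurableSet_closedBall) hdisj) (measure_mono (subset_univ _))
      _ = ENNReal.ofReal (4 ^ d * Kr) / α * ∫⁻ x, g x := by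
          rw [hνuniv, ENNReal.ofReal_mul (by positivity), div_eq_mul_inv, div_eq_mul_inv]
          ring

lemma maximal_le_add {g g1 : Ed d → ℝ≥0∞} {c : ℝ≥0∞} (h : ∀ y, g y ≤ g1 y + c) (x : Ed d) :
    maximal g x ≤ maximal g1 x + c := by
  show (⨆ (Q : Cube d) (_ : x ∈ Q.carrier), lavg Q g) ≤ _
  refine iSup₂_le fun Q hQ => ?_
  have hint : (∫⁻ y in Q.carrier, g y) ≤ (∫⁻ y in Q.carrier, g1 y) + c * volume Q.carrier := by
    calc (∫⁻ y in Q.carrier, g y) ≤ ∫⁻ y in Q.carrier, (g1 y + c) := lintegral_mono h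
      _ = (∫⁻ y in Q.carrier, g1 y) + c * volume Q.carrier := by
          rw [lintegral_add_right _ measurable_const, setLIntegral_const]
  have h1 : lavg Q g ≤ lavg Q g1 + c := by
    calc lavg Q g = (volume Q.carrier)⁻¹ * ∫⁻ y in Q.carrier, g y := rfl
      _ ≤ (volume Q.carrier)⁻¹ * ((∫⁻ y in Q.carrier, g1 y) + c * volume Q.carrier) :=
          mul_le_mul_right hint _
      _ = lavg Q g1 + (volume Q.carrier)⁻¹ * (c * volume Q.carrier) := by
          rw [mul_add]; rfl
      _ = lavg Q g1 + c := by
          rw [mul_comm c, ← mul_assoc,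
            ENNReal.inv_mul_cancel (vol_carrier_pos Q).ne' (vol_carrier_ne_top Q), one_mul]
  refine h1.trans (add_le_add_left ?_ c)
  exact le_iSup₂ (f := fun (Q : Cube d) (_ : x ∈ Q.carrier) => lavg Q g1) Q hQ

lemma trunc_bound {F : Ed d → ℝ} (hF : Measurable F) (hF0 : ∀ x, 0 ≤ F x)
    {τ t0 : ℝ} (hτ0 : 0 < τ) (hτ1 : τ < 1) (ht0 : 0 < t0) :
    (∫⁻ y in {y | t0 < F y}, ENNReal.ofReal (F y ^ τ)) ≤
      ENNReal.ofReal (((2:ℝ) ^ τ * t0 ^ (τ - 1)) * (1 - (2:ℝ) ^ (τ - 1))⁻¹) *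
        ⨆ (t : ℝ) (_ : t0 ≤ t), ENNReal.ofReal t * volume {x | t < F x} := by
  set S := ⨆ (t : ℝ) (_ : t0 ≤ t), ENNReal.ofReal t * volume {x | t < F x} with hS
  set q : ℝ := (2:ℝ) ^ (τ - 1) with hq
  have hqpos : 0 < q := Real.rpow_pos_of_pos two_pos _
  have hq1 : q < 1 := Real.rpow_lt_one_of_one_lt_of_neg one_lt_two (by linarith)
  have h1q : (0:ℝ) < 1 - q := by linarith
  set A : ℕ → Set (Ed d) :=
    fun k => {y | (2:ℝ) ^ k * t0 < F y ∧ F y ≤ (2:ℝ) ^ (k+1) * t0} with hA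
  have hAm : ∀ k, MeasurableSet (A k) :=
    fun k => (measurableSet_lt measurable_const hF).inter (measurableSet_le hF measurable_const)
  have hdisj : Pairwise (Function.onFun Disjoint A) := by
    intro k l hkl
    wlog h : k < l generalizing k l
    · exact (this hkl.symm (by omega)).symm
    refine Set.disjoint_left.mpr fun y hy1 hy2 => ?_
    have h1 : F y ≤ (2:ℝ) ^ (k+1) * t0 := hy1.2
    have h2 : (2:ℝ) ^ l * t0 < F y := hy2.1
    have h3 : (2:ℝ) ^ (k+1) ≤ (2:ℝ) ^ l := pow_le_pow_right₀ one_le_two (by omega)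
    nlinarith
  have hcup : {y | t0 < F y} = ⋃ k, A k := by
    ext y
    simp only [mem_iUnion, mem_setOf_eq, hA]
    constructor
    · intro hy
      have hex : ∃ k : ℕ, F y ≤ (2:ℝ) ^ (k+1) * t0 := by
        obtain ⟨n, hn⟩ := pow_unbounded_of_one_lt (F y / t0) one_lt_two
        refine ⟨n, ?_⟩
        rw [div_lt_iff₀ ht0] at hn
        have h4 : (2:ℝ) ^ n ≤ (2:ℝ) ^ (n+1) := pow_le_pow_right₀ one_le_two (by omega)
        nlinarith
      refine ⟨Nat.find hex, ?_, Nat.find_spec hex⟩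
      rcases Nat.eq_zero_or_pos (Nat.find hex) with h0 | h0
      · rw [h0]; simpa using hy
      · have hmin := Nat.find_min hex (Nat.sub_lt h0 one_pos)
        push_neg at hmin
        have hkk : Nat.find hex - 1 + 1 = Nat.find hex := Nat.succ_pred_eq_of_pos h0
        rwa [hkk] at hmin
    · rintro ⟨k, hk1, hk2⟩
      have hp : (1:ℝ) ≤ 2 ^ k := one_le_pow₀ one_le_two
      nlinarith
  rw [hcup, lintegral_iUnion hAm hdisj]
  have hterm : ∀ k : ℕ, (∫⁻ y in A k, ENNReal.ofReal (F y ^ τ)) ≤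
      ENNReal.ofReal ((2:ℝ) ^ τ * t0 ^ (τ - 1)) * ENNReal.ofReal q ^ k * S := by
    intro k
    have hc0 : (0:ℝ) ≤ (2:ℝ) ^ τ * t0 ^ (τ - 1) :=
      mul_nonneg (Real.rpow_nonneg (by norm_num) _) (Real.rpow_nonneg ht0.le _)
    have h1 : (∫⁻ y in A k, ENNReal.ofReal (F y ^ τ)) ≤
        ENNReal.ofReal (((2:ℝ) ^ (k+1) * t0) ^ τ) * volume (A k) := by
      rw [← setLIntegral_const]
      refine setLIntegral_mono' (hAm k) fun y hy => ?_
      exact ENNReal.ofReal_le_ofReal (Real.rpow_le_rpow (hF0 y) hy.2 hτ0.le)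
    have h2 : volume (A k) ≤ volume {x | (2:ℝ) ^ k * t0 < F x} :=
      measure_mono fun y hy => hy.1
    have hSk : ENNReal.ofReal ((2:ℝ) ^ k * t0) * volume {x | (2:ℝ) ^ k * t0 < F x} ≤ S := by
      have hcond : t0 ≤ (2:ℝ) ^ k * t0 :=
        le_mul_of_one_le_left ht0.le (one_le_pow₀ one_le_two)
      exact le_iSup₂ (f := fun (t:ℝ) (_ : t0 ≤ t) =>
        ENNReal.ofReal t * volume {x | t < F x}) _ hcond
    have e1 : ((2:ℝ) ^ (k+1) * t0) ^ τ = (2:ℝ) ^ (((k:ℝ)+1) * τ) * t0 ^ τ := by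
      rw [Real.mul_rpow (by positivity) ht0.le, ← Real.rpow_natCast 2 (k+1),
        ← Real.rpow_mul (by norm_num : (0:ℝ) ≤ 2)]
      push_cast
      ring_nf
    have e5 : (2:ℝ) ^ (((k:ℝ)+1) * τ) = (2:ℝ) ^ τ * (2:ℝ) ^ ((τ-1) * (k:ℝ)) * (2:ℝ) ^ ((k:ℝ)) := by
      rw [← Real.rpow_add two_pos, ← Real.rpow_add two_pos]
      congr 1
      ring
    have e2 : q ^ k = (2:ℝ) ^ ((τ - 1) * (k:ℝ)) := by
      rw [hq, ← Real.rpow_natCast ((2:ℝ) ^ (τ-1)) k, ← Real.rpow_mul (by norm_num : (0:ℝ) ≤ 2)]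
    have e3 : (2:ℝ) ^ (k:ℕ) = (2:ℝ) ^ ((k:ℝ)) := (Real.rpow_natCast 2 k).symm
    have e4 : t0 ^ (τ-1) * t0 = t0 ^ τ := by
      nth_rewrite 2 [← Real.rpow_one t0]
      rw [← Real.rpow_add ht0]
      ring_nf
    have hreal : ((2:ℝ) ^ (k+1) * t0) ^ τ =
        ((2:ℝ) ^ τ * t0 ^ (τ - 1)) * q ^ k * ((2:ℝ) ^ k * t0) := by
      rw [e1, e5, e2, e3, ← e4]
      ring
    calc (∫⁻ y in A k, ENNReal.ofReal (F y ^ τ))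
        ≤ ENNReal.ofReal (((2:ℝ) ^ (k+1) * t0) ^ τ) * volume (A k) := h1
      _ ≤ ENNReal.ofReal (((2:ℝ) ^ (k+1) * t0) ^ τ) * volume {x | (2:ℝ) ^ k * t0 < F x} :=
          mul_le_mul_right h2 _
      _ = ENNReal.ofReal ((2:ℝ) ^ τ * t0 ^ (τ - 1)) * ENNReal.ofReal q ^ k *
            (ENNReal.ofReal ((2:ℝ) ^ k * t0) * volume {x | (2:ℝ) ^ k * t0 < F x}) := by
          rw [hreal, ENNReal.ofReal_mul (mul_nonneg hc0 (pow_nonneg hqpos.le k)),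
            ENNReal.ofReal_mul hc0, ENNReal.ofReal_pow hqpos.le, mul_assoc]
      _ ≤ ENNReal.ofReal ((2:ℝ) ^ τ * t0 ^ (τ - 1)) * ENNReal.ofReal q ^ k * S :=
          mul_le_mul_right hSk _
  have hc0 : (0:ℝ) ≤ (2:ℝ) ^ τ * t0 ^ (τ - 1) :=
    mul_nonneg (Real.rpow_nonneg (by norm_num) _) (Real.rpow_nonneg ht0.le _)
  calc (∑' k, ∫⁻ y in A k, ENNReal.ofReal (F y ^ τ))
      ≤ ∑' k : ℕ, ENNReal.ofReal ((2:ℝ) ^ τ * t0 ^ (τ - 1)) * ENNReal.ofReal q ^ k * S :=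
        ENNReal.tsum_le_tsum hterm
    _ = (ENNReal.ofReal ((2:ℝ) ^ τ * t0 ^ (τ - 1)) * S) * ∑' k : ℕ, ENNReal.ofReal q ^ k := by
        rw [← ENNReal.tsum_mul_left]
        refine tsum_congr fun k => by ring
    _ = (ENNReal.ofReal ((2:ℝ) ^ τ * t0 ^ (τ - 1)) * S) * (1 - ENNReal.ofReal q)⁻¹ := by
        rw [ENNReal.tsum_geometric]
    _ = ENNReal.ofReal (((2:ℝ) ^ τ * t0 ^ (τ - 1)) * (1 - q)⁻¹) * S := by
        rw [ENNReal.ofReal_mul hc0, ← ENNReal.ofReal_one, ← ENNReal.ofReal_sub _ hqpos.le,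
          ← ENNReal.ofReal_inv_of_pos h1q]
        ring

end AuxRough
end Rough

open MeasureTheory ENNReal Rough in
theorem stmt7 (d : ℕ) (τ : ℝ) (hτ0 : 0 < τ) (hτ1 : τ < 1) :
    ∃ C : ℝ, 0 < C ∧
      ∀ F : Ed d → ℝ, Measurable F → (∀ x, 0 ≤ F x) → ∀ lam : ℝ, 0 < lam →
        volume {x | ENNReal.ofReal lam <
            (maximal (fun y => ENNReal.ofReal (F y ^ τ)) x) ^ (1 / τ)} ≤
          ENNReal.ofReal C / ENNReal.ofReal lam *
            ⨆ (t : ℝ) (_ : (2 : ℝ) ^ (-1 / τ) * lam ≤ t),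
              ENNReal.ofReal t * volume {x | t < F x} := by
  have hq1 : (2:ℝ) ^ (τ - 1) < 1 := Real.rpow_lt_one_of_one_lt_of_neg one_lt_two (by linarith)
  have hqpos : (0:ℝ) < (2:ℝ) ^ (τ - 1) := Real.rpow_pos_of_pos two_pos _
  have hw : (0:ℝ) < (1 - (2:ℝ) ^ (τ - 1))⁻¹ := inv_pos.mpr (by linarith)
  set Cd : ℝ := 4 ^ d * (1 + 2 * Real.sqrt d) ^ d with hCd
  have hCdpos : 0 < Cd := by positivity
  set C : ℝ := Cd * (((2:ℝ) ^ τ * ((2:ℝ) ^ (-1/τ)) ^ (τ - 1)) * (1 - (2:ℝ) ^ (τ - 1))⁻¹) * 2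
    with hC
  have hCpos : 0 < C :=
    mul_pos (mul_pos hCdpos (mul_pos (mul_pos (Real.rpow_pos_of_pos two_pos τ)
      (Real.rpow_pos_of_pos (Real.rpow_pos_of_pos two_pos _) _)) hw)) two_pos
  refine ⟨C, hCpos, ?_⟩
  intro F hF hF0 lam hlam
  set t0 : ℝ := (2:ℝ) ^ (-1/τ) * lam with ht0def
  have ht0 : 0 < t0 := mul_pos (Real.rpow_pos_of_pos two_pos _) hlam
  set g : Ed d → ℝ≥0∞ := fun y => ENNReal.ofReal (F y ^ τ) with hg
  set g1 : Ed d → ℝ≥0∞ := ({y | t0 < F y}).indicator g with hg1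
  set α : ℝ≥0∞ := ENNReal.ofReal (lam ^ τ / 2) with hα
  have hlτ : (0:ℝ) < lam ^ τ := Real.rpow_pos_of_pos hlam τ
  have hαpos : α ≠ 0 := by
    rw [hα, Ne, ENNReal.ofReal_eq_zero, not_le]
    positivity
  have ht0τ : t0 ^ τ = lam ^ τ / 2 := by
    rw [ht0def, Real.mul_rpow (by positivity) hlam.le,
      ← Real.rpow_mul (by norm_num : (0:ℝ) ≤ 2), show (-1/τ) * τ = -1 by field_simp,
      Real.rpow_neg_one]
    ring
  have hsub : ∀ y, g y ≤ g1 y + α := by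
    intro y
    by_cases hy : y ∈ {y | t0 < F y}
    · rw [hg1, Set.indicator_of_mem hy]; exact le_self_add
    · rw [hg1, Set.indicator_of_notMem hy, zero_add, hα, ← ht0τ]
      exact ENNReal.ofReal_le_ofReal (Real.rpow_le_rpow (hF0 y) (not_lt.mp hy) hτ0.le)
  have hset : {x | ENNReal.ofReal lam < maximal g x ^ (1/τ)} ⊆ {x | α < maximal g1 x} := by
    intro x hx
    have hx' : ENNReal.ofReal lam < maximal g x ^ (1/τ) := hx
    have h2 : ENNReal.ofReal (lam ^ τ) < maximal g x := by
      have h3 := ENNReal.rpow_lt_rpow hx' hτ0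
      rwa [← ENNReal.rpow_mul, one_div, inv_mul_cancel₀ hτ0.ne', ENNReal.rpow_one,
        ENNReal.ofReal_rpow_of_pos hlam] at h3
    by_contra hcon
    simp only [Set.mem_setOf_eq, not_lt] at hcon
    have h4 := (AuxRough.maximal_le_add hsub x).trans (add_le_add_left hcon α)
    rw [hα, ← ENNReal.ofReal_add (by positivity) (by positivity),
      show lam ^ τ / 2 + lam ^ τ / 2 = lam ^ τ by ring] at h4
    exact absurd (h2.trans_le h4) (lt_irrefl _)
  refine le_trans (measure_mono hset) ?_
  refine le_trans (AuxRough.weak11 g1 α hαpos) ?_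
  have hint : (∫⁻ x, g1 x) = ∫⁻ y in {y | t0 < F y}, g y := by
    rw [hg1, lintegral_indicator (measurableSet_lt measurable_const hF)]
  rw [hint]
  refine le_trans (mul_le_mul_right (AuxRough.trunc_bound hF hF0 hτ0 hτ1 ht0) _) ?_
  set S := ⨆ (t : ℝ) (_ : t0 ≤ t), ENNReal.ofReal t * volume {x | t < F x} with hSdef
  have hrearr : ENNReal.ofReal Cd / α *
      (ENNReal.ofReal (((2:ℝ) ^ τ * t0 ^ (τ - 1)) * (1 - (2:ℝ) ^ (τ - 1))⁻¹) * S) =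
      (ENNReal.ofReal Cd *
        ENNReal.ofReal (((2:ℝ) ^ τ * t0 ^ (τ - 1)) * (1 - (2:ℝ) ^ (τ - 1))⁻¹) / α) * S := by
    rw [div_eq_mul_inv, div_eq_mul_inv]
    ring
  rw [hrearr]
  refine mul_le_mul_left ?_ S
  have hc0 : (0:ℝ) ≤ ((2:ℝ) ^ τ * t0 ^ (τ - 1)) * (1 - (2:ℝ) ^ (τ - 1))⁻¹ :=
    mul_nonneg (mul_nonneg (Real.rpow_nonneg (by norm_num) _) (Real.rpow_nonneg ht0.le _)) hw.le
  rw [hα, ← ENNReal.ofReal_mul hCdpos.le, ← ENNReal.ofReal_div_of_pos (by positivity),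
    ← ENNReal.ofReal_div_of_pos hlam]
  refine ENNReal.ofReal_le_ofReal ?_
  have h1 : t0 ^ (τ - 1) = ((2:ℝ) ^ (-1/τ)) ^ (τ - 1) * lam ^ (τ - 1) := by
    rw [ht0def, Real.mul_rpow (by positivity) hlam.le]
  have h2 : lam ^ (τ - 1) = lam ^ τ / lam := by
    rw [Real.rpow_sub hlam, Real.rpow_one]
  rw [hC, h1, h2, div_le_div_iff₀ (by positivity) hlam]
  apply le_of_eq
  have hlne : lam ≠ 0 := hlam.ne'
  have h1qne : (1:ℝ) - 2 ^ (τ - 1) ≠ 0 := by linarith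
  field_simp
end
end
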